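/- For every l ≥ 0, the space of ℝ³-valued polynomial vector fields of total degree ≤ l on ℝ³ decomposes as a direct sum ℛ^l ⊕ ℛ^{c,l}, where ℛ^l = { curl w : w ℝ³-valued polynomial field of degree ≤ l+1 } and ℛ^{c,l} = { x q : q scalar polynomial of degree ≤ l−1 }. -/

import Mathlib

open MvPolynomial

/-- ℝ³-valued polynomial vector fields with components of total degree ≤ l. -/
noncomputable def polyVec3 (l : ℕ) : Submodule ℝ (Fin 3 → MvPolynomial (Fin 3) ℝ) :=
  Submodule.pi Set.univ fun _ => MvPolynomial.restrictTotalDegree (Fin 3) ℝ l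

/-- Curl of a polynomial vector field on ℝ³. -/
noncomputable def pcurl3 (w : Fin 3 → MvPolynomial (Fin 3) ℝ) :
    Fin 3 → MvPolynomial (Fin 3) ℝ :=
  ![MvPolynomial.pderiv 1 (w 2) - MvPolynomial.pderiv 2 (w 1),
    MvPolynomial.pderiv 2 (w 0) - MvPolynomial.pderiv 0 (w 2),
    MvPolynomial.pderiv 0 (w 1) - MvPolynomial.pderiv 1 (w 0)]

/-- ℛ^l = curls of ℝ³-valued polynomial fields of degree ≤ l+1. -/
noncomputable def Rsp3 (l : ℕ) : Submodule ℝ (Fin 3 → MvPolynomial (Fin 3) ℝ) :=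
  Submodule.span ℝ {v | ∃ w : Fin 3 → MvPolynomial (Fin 3) ℝ,
    (∀ i, (w i).totalDegree ≤ l + 1) ∧ v = pcurl3 w}

/-- The coordinate vector x = (x₁, x₂, x₃) as a polynomial vector field. -/
noncomputable def xvec3 : Fin 3 → MvPolynomial (Fin 3) ℝ := ![X 0, X 1, X 2]

/-- ℛ^{c,l} = x 𝒫^{l−1}(ℝ³) (reduced to {0} when l = 0). -/
noncomputable def Rcsp3 (l : ℕ) : Submodule ℝ (Fin 3 → MvPolynomial (Fin 3) ℝ) :=
  Submodule.span ℝ {v | ∃ q : MvPolynomial (Fin 3) ℝ,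
    q.totalDegree + 1 ≤ l ∧ v = fun i => xvec3 i * q}

set_option linter.unusedSectionVars false
set_option maxHeartbeats 800000

namespace Helm

lemma sum_eq_degree (d : Fin 3 →₀ ℕ) : (d.sum fun _ e => e) = d.degree := rfl

lemma sum_id_eq_degree (d : Fin 3 →₀ ℕ) : (d.sum fun _ ↦ id) = d.degree := rfl

lemma degree_add (a b : Fin 3 →₀ ℕ) : (a + b).degree = a.degree + b.degree := by
  simp [Finsupp.degree_eq_weight_one, map_add]

lemma degree_single (i : Fin 3) (n : ℕ) : (Finsupp.single i n).degree = n := by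
  classical
  rcases eq_or_ne n 0 with h | h
  · simp [h]
  · simp [Finsupp.degree_apply, Finsupp.support_single_ne_zero _ h]

abbrev P3 := MvPolynomial (Fin 3) ℝ

lemma X_mul_pderiv_monomial (i : Fin 3) (s : Fin 3 →₀ ℕ) (a : ℝ) :
    X i * pderiv i (monomial s a) = monomial s (a * s i) := by
  rw [pderiv_monomial]
  rcases eq_or_ne (s i) 0 with h | h
  · simp [h]
  · rw [X, monomial_mul, one_mul, add_tsub_cancel_of_le]
    rw [Finsupp.single_le_iff]
    omega

lemma degree_fin3 (d : Fin 3 →₀ ℕ) : d.degree = d 0 + d 1 + d 2 := by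
  have h : ∑ i ∈ d.support, d i = ∑ i : Fin 3, d i :=
    Finset.sum_subset (Finset.subset_univ _)
      (by intro x _ hx; simpa using hx)
  rw [Finsupp.degree_apply, h, Fin.sum_univ_three]

lemma degree_of_mem_support {p : P3} {n : ℕ} (h : p.IsHomogeneous n) {d : Fin 3 →₀ ℕ}
    (hd : d ∈ p.support) : d.degree = n := by
  have := h (MvPolynomial.mem_support_iff.mp hd)
  rwa [Finsupp.degree_eq_weight_one]

lemma euler (p : P3) (n : ℕ) (h : p.IsHomogeneous n) :
    X 0 * pderiv 0 p + X 1 * pderiv 1 p + X 2 * pderiv 2 p = C (n : ℝ) * p := by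
  conv_lhs => rw [as_sum p]
  conv_rhs => rw [as_sum p]
  rw [map_sum, map_sum, map_sum, Finset.mul_sum, Finset.mul_sum, Finset.mul_sum, Finset.mul_sum,
    ← Finset.sum_add_distrib, ← Finset.sum_add_distrib]
  refine Finset.sum_congr rfl fun d hd => ?_
  rw [X_mul_pderiv_monomial, X_mul_pderiv_monomial, X_mul_pderiv_monomial, C_mul_monomial,
    ← map_add, ← map_add]
  congr 1
  have : d.degree = n := degree_of_mem_support h hd
  rw [degree_fin3] at this
  rw [← this]
  push_cast
  ring

lemma isHomog_pderiv {p : P3} {n : ℕ} (i : Fin 3) (h : p.IsHomogeneous n) :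
    (pderiv i p).IsHomogeneous (n - 1) := by
  rw [← mem_homogeneousSubmodule]
  have hrepr : pderiv i p = ∑ d ∈ p.support, pderiv i (monomial d (coeff d p)) := by
    conv_lhs => rw [as_sum p]
    rw [map_sum]
  rw [hrepr]
  apply Submodule.sum_mem
  intro d hd
  rw [pderiv_monomial]
  rcases eq_or_ne (d i) 0 with h0 | h0
  · simp [h0]
  · rw [mem_homogeneousSubmodule]
    apply isHomogeneous_monomial
    have hcan : (d - Finsupp.single i 1) + Finsupp.single i 1 = d := by
      rw [tsub_add_cancel_of_le]
      rw [Finsupp.single_le_iff]; omega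
    have h2 := congrArg Finsupp.degree hcan
    rw [degree_add, degree_single] at h2
    have h3 : d.degree = n := degree_of_mem_support h hd
    omega

lemma td_pderiv {p : P3} {n : ℕ} (i : Fin 3) (h : p.totalDegree ≤ n + 1) :
    (pderiv i p).totalDegree ≤ n := by
  have hrepr : pderiv i p
      = ∑ d ∈ p.support, monomial (d - Finsupp.single i 1) (coeff d p * d i) := by
    conv_lhs => rw [as_sum p]
    rw [map_sum]
    exact Finset.sum_congr rfl fun d _ => pderiv_monomial
  rw [hrepr]
  refine le_trans (totalDegree_finset_sum _ _) (Finset.sup_le fun d hd => ?_)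
  rcases eq_or_ne (d i) 0 with h0 | h0
  · simp [h0]
  · refine le_trans (totalDegree_monomial_le _ _) ?_
    rw [sum_id_eq_degree]
    have hcan : (d - Finsupp.single i 1) + Finsupp.single i 1 = d := by
      rw [tsub_add_cancel_of_le]
      rw [Finsupp.single_le_iff]; omega
    have h2 := congrArg Finsupp.degree hcan
    rw [degree_add, degree_single] at h2
    have h3 : d.degree ≤ n + 1 := by
      have := le_totalDegree (p := p) hd
      rw [sum_eq_degree] at this
      omega
    omega

lemma hc_monomial (t : ℕ) (d : Fin 3 →₀ ℕ) (a : ℝ) :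
    homogeneousComponent t (monomial d a)
      = if d.degree = t then monomial d a else 0 := by
  rcases eq_or_ne d.degree t with h | h
  · rw [if_pos h]
    ext e
    rw [coeff_homogeneousComponent]
    by_cases hde : d = e
    · subst hde; rw [if_pos h]
    · simp [coeff_monomial, hde]
  · rw [if_neg h]
    ext e
    rw [coeff_homogeneousComponent]
    by_cases hde : d = e
    · subst hde; simp [h]
    · simp [coeff_monomial, hde]

lemma hc_comm (t : ℕ) (i : Fin 3) (q : P3) :
    homogeneousComponent t (X i * pderiv i q)
      = X i * pderiv i (homogeneousComponent t q) := by
  induction q using MvPolynomial.induction_on' with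
  | monomial s a =>
    rw [X_mul_pderiv_monomial, hc_monomial, hc_monomial]
    split_ifs with h
    · rw [X_mul_pderiv_monomial]
    · simp
  | add p q hp hq => simp only [mul_add, map_add, hp, hq]

lemma q_eq_zero (q : P3)
    (h : pderiv 0 (X 0 * q) + pderiv 1 (X 1 * q) + pderiv 2 (X 2 * q) = 0) : q = 0 := by
  have h2 : q + X 0 * pderiv 0 q + (q + X 1 * pderiv 1 q) + (q + X 2 * pderiv 2 q) = 0 := by
    rw [← h]; simp [pderiv_mul, pderiv_X_self]; ring
  have key : ∀ t : ℕ, homogeneousComponent t q = 0 := by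
    intro t
    have h3 := congrArg (homogeneousComponent t) h2
    simp only [map_add, map_zero, hc_comm] at h3
    have he := euler (homogeneousComponent t q) t (homogeneousComponent_isHomogeneous t q)
    have h4 : ((3 : ℝ) + t) • homogeneousComponent t q = 0 := by
      rw [smul_eq_C_mul, map_add]
      have c3 : (C (3 : ℝ) : P3) = 3 := by simp [map_ofNat]
      rw [c3]
      linear_combination h3 - he
    have hne : ((3 : ℝ) + t) ≠ 0 := by positivity
    have h5 := congrArg (fun z => ((3 : ℝ) + t)⁻¹ • z) h4
    simpa [smul_smul, inv_mul_cancel₀ hne] using h5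
  ext d
  have h6 := key d.degree
  have h7 : coeff d q = coeff d (homogeneousComponent d.degree q) := by
    rw [coeff_homogeneousComponent, if_pos rfl]
  rw [h7, h6, coeff_zero]



lemma pderiv_comm (i j : Fin 3) (p : P3) :
    pderiv i (pderiv j p) = pderiv j (pderiv i p) := by
  induction p using MvPolynomial.induction_on' with
  | monomial s a =>
    rcases eq_or_ne i j with rfl | hij
    · rfl
    · simp only [pderiv_monomial]
      rw [Finsupp.tsub_apply, Finsupp.tsub_apply, Finsupp.single_apply, Finsupp.single_apply,
        if_neg hij, if_neg (Ne.symm hij)]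
      congr 1
      · rw [tsub_tsub, tsub_tsub, add_comm]
      · simp; ring
  | add p q hp hq => simp [map_add, hp, hq]

lemma comp_id (i j k : Fin 3) (hij : i ≠ j) (hik : i ≠ k)
    (a b c : P3) (r : ℕ)
    (he : X i * pderiv i a + X j * pderiv j a + X k * pderiv k a = C (r : ℝ) * a) :
    (pderiv j (a * X j - b * X i) - pderiv k (c * X i - a * X k))
      + X i * (pderiv i a + pderiv j b + pderiv k c) = C ((r : ℝ) + 2) * a := by
  rw [map_sub, map_sub, pderiv_mul, pderiv_mul, pderiv_mul, pderiv_mul,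
    pderiv_X_self, pderiv_X_self, pderiv_X_of_ne hij, pderiv_X_of_ne hik, map_add]
  have c2 : (C (2 : ℝ) : P3) = 2 := by simp [map_ofNat]
  rw [c2]
  linear_combination he

lemma curl_id (r : ℕ) (v : Fin 3 → P3) (h : ∀ i, (v i).IsHomogeneous r) :
    pcurl3 ![v 1 * X 2 - v 2 * X 1, v 2 * X 0 - v 0 * X 2, v 0 * X 1 - v 1 * X 0]
      + (fun i => xvec3 i * (pderiv 0 (v 0) + pderiv 1 (v 1) + pderiv 2 (v 2)))
      = ((r : ℝ) + 2) • v := by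
  have e0 : X 0 * pderiv 0 (v 0) + X 1 * pderiv 1 (v 0) + X 2 * pderiv 2 (v 0)
      = C (r : ℝ) * v 0 := euler (v 0) r (h 0)
  have e1 : X 1 * pderiv 1 (v 1) + X 2 * pderiv 2 (v 1) + X 0 * pderiv 0 (v 1)
      = C (r : ℝ) * v 1 := by linear_combination euler (v 1) r (h 1)
  have e2 : X 2 * pderiv 2 (v 2) + X 0 * pderiv 0 (v 2) + X 1 * pderiv 1 (v 2)
      = C (r : ℝ) * v 2 := by linear_combination euler (v 2) r (h 2)
  funext i
  fin_cases i
  · show (pderiv 1 (v 0 * X 1 - v 1 * X 0) - pderiv 2 (v 2 * X 0 - v 0 * X 2))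
      + X 0 * (pderiv 0 (v 0) + pderiv 1 (v 1) + pderiv 2 (v 2)) = ((r : ℝ) + 2) • v 0
    rw [smul_eq_C_mul]
    linear_combination comp_id 0 1 2 (by decide) (by decide) (v 0) (v 1) (v 2) r e0
  · show (pderiv 2 (v 1 * X 2 - v 2 * X 1) - pderiv 0 (v 0 * X 1 - v 1 * X 0))
      + X 1 * (pderiv 0 (v 0) + pderiv 1 (v 1) + pderiv 2 (v 2)) = ((r : ℝ) + 2) • v 1
    rw [smul_eq_C_mul]
    linear_combination comp_id 1 2 0 (by decide) (by decide) (v 1) (v 2) (v 0) r e1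
  · show (pderiv 0 (v 2 * X 0 - v 0 * X 2) - pderiv 1 (v 1 * X 2 - v 2 * X 1))
      + X 2 * (pderiv 0 (v 0) + pderiv 1 (v 1) + pderiv 2 (v 2)) = ((r : ℝ) + 2) • v 2
    rw [smul_eq_C_mul]
    linear_combination comp_id 2 0 1 (by decide) (by decide) (v 2) (v 0) (v 1) r e2

lemma sum_hc (p : P3) (l : ℕ) (h : p.totalDegree ≤ l) :
    ∑ r ∈ Finset.range (l + 1), homogeneousComponent r p = p := by
  conv_rhs => rw [← sum_homogeneousComponent p]
  refine (Finset.sum_subset (Finset.range_subset_range.mpr (by omega)) ?_).symm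
  intro x _ hx
  exact homogeneousComponent_eq_zero x p (by simpa [Finset.mem_range, Nat.lt_succ_iff] using hx)

lemma pderiv_of_homog0 (p : P3) (h : p.IsHomogeneous 0) (j : Fin 3) : pderiv j p = 0 := by
  have hrepr : pderiv j p
      = ∑ d ∈ p.support, monomial (d - Finsupp.single j 1) (coeff d p * d j) := by
    conv_lhs => rw [as_sum p]
    rw [map_sum]
    exact Finset.sum_congr rfl fun d _ => pderiv_monomial
  rw [hrepr]
  apply Finset.sum_eq_zero
  intro d hd
  have h0 : d.degree = 0 := degree_of_mem_support h hd
  have h1 : d j = 0 := by have := Finsupp.le_degree j d; omega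
  simp [h1]

lemma homog_mem_sup (l r : ℕ) (hrl : r ≤ l) (u : Fin 3 → P3)
    (hu : ∀ i, (u i).IsHomogeneous r) : u ∈ Rsp3 l ⊔ Rcsp3 l := by
  set w : Fin 3 → P3 :=
    ![u 1 * X 2 - u 2 * X 1, u 2 * X 0 - u 0 * X 2, u 0 * X 1 - u 1 * X 0] with hw
  set d : P3 := pderiv 0 (u 0) + pderiv 1 (u 1) + pderiv 2 (u 2) with hd'
  have hid := curl_id r u hu
  have hne : ((r : ℝ) + 2) ≠ 0 := by positivity
  have hu' : u = ((r : ℝ) + 2)⁻¹ • (pcurl3 w + fun i => xvec3 i * d) := by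
    rw [hid, smul_smul, inv_mul_cancel₀ hne, one_smul]
  rw [hu']
  apply Submodule.smul_mem
  apply Submodule.add_mem_sup
  · apply Submodule.subset_span
    refine ⟨w, ?_, rfl⟩
    have hb : ∀ j, (u j).totalDegree ≤ r := fun j => (hu j).totalDegree_le
    have key : ∀ a b : Fin 3, (u a * X b).totalDegree ≤ l + 1 := fun a b =>
      le_trans (totalDegree_mul _ _) (by rw [totalDegree_X]; have := hb a; omega)
    intro i
    fin_cases i <;>
      exact le_trans (totalDegree_sub _ _) (max_le (key _ _) (key _ _))
  · by_cases hd0 : d = 0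
    · have hz : (fun i => xvec3 i * d) = 0 := by funext i; simp [hd0]
      rw [hz]; exact Submodule.zero_mem _
    · apply Submodule.subset_span
      refine ⟨d, ?_, rfl⟩
      rcases r with _ | m
      · exact absurd (by rw [hd', pderiv_of_homog0 _ (hu 0) 0, pderiv_of_homog0 _ (hu 1) 1,
          pderiv_of_homog0 _ (hu 2) 2]; ring) hd0
      · have hdh : d.IsHomogeneous m := by
          rw [← mem_homogeneousSubmodule]
          have g : ∀ i j : Fin 3, pderiv j (u i) ∈ homogeneousSubmodule (Fin 3) ℝ m := by
            intro i j
            rw [mem_homogeneousSubmodule]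
            simpa using isHomog_pderiv j (hu i)
          exact add_mem (add_mem (g 0 0) (g 1 1)) (g 2 2)
        have := hdh.totalDegree_le
        omega

noncomputable def divL : (Fin 3 → P3) →ₗ[ℝ] P3 where
  toFun v := pderiv 0 (v 0) + pderiv 1 (v 1) + pderiv 2 (v 2)
  map_add' v w := by simp only [Pi.add_apply, map_add]; ring
  map_smul' c v := by simp only [Pi.smul_apply, Derivation.map_smul, RingHom.id_apply, smul_add]

noncomputable def xmL : P3 →ₗ[ℝ] (Fin 3 → P3) where
  toFun q := fun i => xvec3 i * q
  map_add' a b := by funext i; simp [mul_add]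
  map_smul' c a := by funext i; simp [mul_smul_comm]

end Helm

open Helm in
theorem polyVec3_eq_curl_directSum_curlComplement (l : ℕ) :
    Rsp3 l ⊔ Rcsp3 l = polyVec3 l ∧ Rsp3 l ⊓ Rcsp3 l = ⊥ := by
  constructor
  · apply le_antisymm
    · refine sup_le (Submodule.span_le.mpr ?_) (Submodule.span_le.mpr ?_)
      · rintro v ⟨w, hw, rfl⟩
        rw [SetLike.mem_coe, polyVec3, Submodule.mem_pi]
        intro i _
        rw [mem_restrictTotalDegree]
        fin_cases i
        · show ((pderiv 1 (w 2) - pderiv 2 (w 1) : P3)).totalDegree ≤ l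
          exact le_trans (totalDegree_sub _ _) (max_le (td_pderiv _ (hw 2)) (td_pderiv _ (hw 1)))
        · show ((pderiv 2 (w 0) - pderiv 0 (w 2) : P3)).totalDegree ≤ l
          exact le_trans (totalDegree_sub _ _) (max_le (td_pderiv _ (hw 0)) (td_pderiv _ (hw 2)))
        · show ((pderiv 0 (w 1) - pderiv 1 (w 0) : P3)).totalDegree ≤ l
          exact le_trans (totalDegree_sub _ _) (max_le (td_pderiv _ (hw 1)) (td_pderiv _ (hw 0)))
      · rintro v ⟨q, hq, rfl⟩
        rw [SetLike.mem_coe, polyVec3, Submodule.mem_pi]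
        intro i _
        rw [mem_restrictTotalDegree]
        have key : ∀ b : Fin 3, ((X b * q : P3)).totalDegree ≤ l := fun b =>
          le_trans (totalDegree_mul _ _) (by rw [totalDegree_X]; omega)
        fin_cases i
        · exact key 0
        · exact key 1
        · exact key 2
    · intro v hv
      rw [polyVec3, Submodule.mem_pi] at hv
      have hv' : ∀ i, (v i).totalDegree ≤ l := fun i =>
        (mem_restrictTotalDegree _ _ _).mp (hv i (Set.mem_univ i))
      have hdecomp : v = ∑ r ∈ Finset.range (l + 1),
          (fun i => homogeneousComponent r (v i)) := by
        funext i
        rw [Finset.sum_apply]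
        exact (sum_hc (v i) l (hv' i)).symm
      rw [hdecomp]
      apply Submodule.sum_mem
      intro r hr
      exact homog_mem_sup l r (by simpa [Nat.lt_succ_iff] using Finset.mem_range.mp hr) _
        (fun i => homogeneousComponent_isHomogeneous r (v i))
  · rw [eq_bot_iff]
    rintro v hv
    rw [Submodule.mem_inf] at hv
    obtain ⟨hR, hC⟩ := hv
    have hdiv : divL v = 0 := by
      have hker : Rsp3 l ≤ LinearMap.ker divL := by
        rw [Rsp3, Submodule.span_le]
        rintro x ⟨w, -, rfl⟩
        rw [SetLike.mem_coe, LinearMap.mem_ker]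
        show pderiv 0 (pderiv 1 (w 2) - pderiv 2 (w 1))
          + pderiv 1 (pderiv 2 (w 0) - pderiv 0 (w 2))
          + pderiv 2 (pderiv 0 (w 1) - pderiv 1 (w 0)) = 0
        rw [map_sub, map_sub, map_sub]
        linear_combination pderiv_comm 0 1 (w 2) - pderiv_comm 0 2 (w 1)
          + pderiv_comm 1 2 (w 0)
      exact LinearMap.mem_ker.mp (hker hR)
    obtain ⟨q, rfl⟩ : ∃ q, xmL q = v := by
      have hrg : Rcsp3 l ≤ LinearMap.range xmL := by
        rw [Rcsp3, Submodule.span_le]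
        rintro x ⟨q, -, rfl⟩
        exact ⟨q, rfl⟩
      exact hrg hC
    have hq : q = 0 := by
      apply q_eq_zero
      have hdx : divL (xmL q)
          = pderiv 0 (X 0 * q) + pderiv 1 (X 1 * q) + pderiv 2 (X 2 * q) := rfl
      rw [← hdx]
      exact hdiv
    rw [hq, map_zero]
    exact Submodule.zero_mem _
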